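/- Let K be a convex set of block laws on A^r × A, each of which is strictly positive (u(c,a) > 0 for all (c,a)). Suppose that for every u ∈ K and every distinct pair v, w ∈ K, there exists a context c ∈ A^r such that the row (v−w)(c,·) is not a scalar multiple of the row u(c,·). Then J is strictly concave on K: for all distinct u, v ∈ K and all t ∈ (0,1), J(t·u + (1−t)·v) > t·J(u) + (1−t)·J(v). In particular, if K is nonempty and compact, J has a unique maximizer on K. -/

import Mathlib

open Finset

/-- Context marginal of a block law on `A^(n+1) × A` (contexts are `Fin (n+1) → A`,
so the memory length is `r = n+1 ≥ 1`). -/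
noncomputable def eta {A : Type*} [Fintype A] {n : ℕ}
    (u : (Fin (n + 1) → A) → A → ℝ) (c : Fin (n + 1) → A) : ℝ :=
  ∑ a, u c a

/-- Entropy-rate functional.  In Lean, `Real.log 0 = 0` and `0 * x = 0`, so the
conventions `0·log 0 = 0` and "terms with `u(c,a) = 0` contribute `0`" hold
automatically. -/
noncomputable def J {A : Type*} [Fintype A] {n : ℕ}
    (u : (Fin (n + 1) → A) → A → ℝ) : ℝ :=
  -∑ c, ∑ a, u c a * Real.log (u c a / eta u c)

/-- A block law: nonnegative entries with total mass one. -/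
def IsBlockLaw {A : Type*} [Fintype A] {n : ℕ}
    (u : (Fin (n + 1) → A) → A → ℝ) : Prop :=
  (∀ c a, 0 ≤ u c a) ∧ ∑ c, ∑ a, u c a = 1

/-- The context `(α, d₁, …, d_{r-1})` obtained from `d = (d₁, …, d_r)` by
prepending `α` and dropping the last entry. -/
def shiftCtx {A : Type*} {n : ℕ} (α : A) (d : Fin (n + 1) → A) : Fin (n + 1) → A :=
  Fin.cons α (fun i : Fin n => d i.castSucc)

/-- Stationary consistency:
`∑_α u((α,d₁,…,d_{r-1}), d_r) = ∑_β u(d, β)` for every block `d`. -/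
def StationaryConsistent {A : Type*} [Fintype A] {n : ℕ}
    (u : (Fin (n + 1) → A) → A → ℝ) : Prop :=
  ∀ d : Fin (n + 1) → A,
    ∑ α : A, u (shiftCtx α d) (d (Fin.last n)) = ∑ β : A, u d β

/-- The feasible class determined by features `G` and targets `b`. -/
def Feasible {A : Type*} [Fintype A] {n m : ℕ}
    (G : Fin m → (Fin (n + 1) → A) → A → ℝ) (b : Fin m → ℝ)
    (u : (Fin (n + 1) → A) → A → ℝ) : Prop :=
  IsBlockLaw u ∧ StationaryConsistent u ∧
    ∀ j, ∑ c, ∑ a, u c a * G j c a = b j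

lemma key_le' {t p q s r : ℝ} (ht : 0 < t) (ht1 : t < 1)
    (hp : 0 < p) (hq : 0 < q) (hs : 0 < s) (hr : 0 < r) :
    t * (p * Real.log (s / p)) + (1 - t) * (q * Real.log (r / q)) ≤
      (t * p + (1 - t) * q) * Real.log ((t * s + (1 - t) * r) / (t * p + (1 - t) * q)) := by
  have ht1' : 0 < 1 - t := by linarith
  set P := t * p + (1 - t) * q with hPdef
  have hP : 0 < P := by positivity
  have ha : 0 ≤ t * p / P := by positivity
  have hb : 0 ≤ (1 - t) * q / P := by positivity
  have hab : t * p / P + (1 - t) * q / P = 1 := by field_simp; exact hPdef.symm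
  have hmem1 : s / p ∈ Set.Ioi (0:ℝ) := div_pos hs hp
  have hmem2 : r / q ∈ Set.Ioi (0:ℝ) := div_pos hr hq
  have hcc := strictConcaveOn_log_Ioi.concaveOn.2 hmem1 hmem2 ha hb hab
  simp only [smul_eq_mul] at hcc
  have harg : t * p / P * (s / p) + (1 - t) * q / P * (r / q) =
      (t * s + (1 - t) * r) / P := by field_simp
  rw [harg] at hcc
  have := mul_le_mul_of_nonneg_left hcc hP.le
  calc t * (p * Real.log (s / p)) + (1 - t) * (q * Real.log (r / q))
      = P * (t * p / P * Real.log (s / p) + (1 - t) * q / P * Real.log (r / q)) := by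
        field_simp
    _ ≤ P * Real.log ((t * s + (1 - t) * r) / P) := this

lemma key_lt' {t p q s r : ℝ} (ht : 0 < t) (ht1 : t < 1)
    (hp : 0 < p) (hq : 0 < q) (hs : 0 < s) (hr : 0 < r) (hne : s / p ≠ r / q) :
    t * (p * Real.log (s / p)) + (1 - t) * (q * Real.log (r / q)) <
      (t * p + (1 - t) * q) * Real.log ((t * s + (1 - t) * r) / (t * p + (1 - t) * q)) := by
  have ht1' : 0 < 1 - t := by linarith
  set P := t * p + (1 - t) * q with hPdef
  have hP : 0 < P := by positivity
  have ha : 0 < t * p / P := by positivity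
  have hb : 0 < (1 - t) * q / P := by positivity
  have hab : t * p / P + (1 - t) * q / P = 1 := by field_simp; exact hPdef.symm
  have hmem1 : s / p ∈ Set.Ioi (0:ℝ) := div_pos hs hp
  have hmem2 : r / q ∈ Set.Ioi (0:ℝ) := div_pos hr hq
  have hcc := strictConcaveOn_log_Ioi.2 hmem1 hmem2 hne ha hb hab
  simp only [smul_eq_mul] at hcc
  have harg : t * p / P * (s / p) + (1 - t) * q / P * (r / q) =
      (t * s + (1 - t) * r) / P := by field_simp
  rw [harg] at hcc
  have := mul_lt_mul_of_pos_left hcc hP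
  calc t * (p * Real.log (s / p)) + (1 - t) * (q * Real.log (r / q))
      = P * (t * p / P * Real.log (s / p) + (1 - t) * q / P * Real.log (r / q)) := by
        field_simp
    _ < P * Real.log ((t * s + (1 - t) * r) / P) := this

lemma J_eq {A : Type*} [Fintype A] {n : ℕ}
    (u : (Fin (n + 1) → A) → A → ℝ) :
    J u = ∑ c, ∑ a, u c a * Real.log (eta u c / u c a) := by
  rw [J, neg_eq_iff_eq_neg, ← Finset.sum_neg_distrib]
  refine Finset.sum_congr rfl fun c _ => ?_
  rw [← Finset.sum_neg_distrib]
  refine Finset.sum_congr rfl fun a _ => ?_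
  rw [← inv_div (eta u c) (u c a), Real.log_inv]
  ring

lemma eta_pos {A : Type*} [Fintype A] [Nonempty A] {n : ℕ}
    {u : (Fin (n + 1) → A) → A → ℝ} (h : ∀ c a, 0 < u c a) (c : Fin (n + 1) → A) :
    0 < eta u c :=
  Finset.sum_pos (fun a _ => h c a) Finset.univ_nonempty

lemma eta_combo {A : Type*} [Fintype A] {n : ℕ}
    (u v : (Fin (n + 1) → A) → A → ℝ) (t : ℝ) (c : Fin (n + 1) → A) :
    eta (t • u + (1 - t) • v) c = t * eta u c + (1 - t) * eta v c := by
  simp only [eta, Pi.add_apply, Pi.smul_apply, smul_eq_mul, Finset.sum_add_distrib,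
    ← Finset.mul_sum]

lemma strict_step {A : Type*} [Fintype A] [Nonempty A] {n : ℕ}
    {u v : (Fin (n + 1) → A) → A → ℝ}
    (hu : ∀ c a, 0 < u c a) (hv : ∀ c a, 0 < v c a)
    {t : ℝ} (ht : 0 < t) (ht1 : t < 1)
    {c₀ : Fin (n + 1) → A} {a₀ : A}
    (hne : eta u c₀ / u c₀ a₀ ≠ eta v c₀ / v c₀ a₀) :
    t * J u + (1 - t) * J v < J (t • u + (1 - t) • v) := by
  have hmix : ∀ c a, (t • u + (1 - t) • v) c a = t * u c a + (1 - t) * v c a := by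
    intro c a; simp [smul_eq_mul]
  rw [J_eq u, J_eq v, J_eq (t • u + (1 - t) • v), Finset.mul_sum, Finset.mul_sum,
    ← Finset.sum_add_distrib]
  refine Finset.sum_lt_sum (fun c _ => ?_) ⟨c₀, Finset.mem_univ _, ?_⟩
  · rw [Finset.mul_sum, Finset.mul_sum, ← Finset.sum_add_distrib]
    refine Finset.sum_le_sum fun a _ => ?_
    rw [hmix, eta_combo]
    exact key_le' ht ht1 (hu c a) (hv c a) (eta_pos hu c) (eta_pos hv c)
  · rw [Finset.mul_sum, Finset.mul_sum, ← Finset.sum_add_distrib]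
    refine Finset.sum_lt_sum (fun a _ => ?_) ⟨a₀, Finset.mem_univ _, ?_⟩
    · rw [hmix, eta_combo]
      exact key_le' ht ht1 (hu c₀ a) (hv c₀ a) (eta_pos hu c₀) (eta_pos hv c₀)
    · rw [hmix, eta_combo]
      exact key_lt' ht ht1 (hu c₀ a₀) (hv c₀ a₀) (eta_pos hu c₀) (eta_pos hv c₀) hne

/-- On a convex set `K` of strictly positive block laws such that
no difference of two distinct members of `K` has every row a scalar multiple of
the corresponding row of a member of `K`, the functional `J` is strictly
concave; if moreover `K` is nonempty and compact, `J` has a unique maximizer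
on `K`. -/
theorem stmt13 {A : Type*} [Fintype A] [Nonempty A] {n : ℕ}
    (K : Set ((Fin (n + 1) → A) → A → ℝ)) (hK : Convex ℝ K)
    (hbl : ∀ u ∈ K, IsBlockLaw u)
    (hpos : ∀ u ∈ K, ∀ c a, 0 < u c a)
    (hrow : ∀ u ∈ K, ∀ v ∈ K, ∀ w ∈ K, v ≠ w →
      ∃ c, ¬ ∃ α : ℝ, ∀ a, v c a - w c a = α * u c a) :
    (∀ u ∈ K, ∀ v ∈ K, u ≠ v → ∀ t ∈ Set.Ioo (0 : ℝ) 1,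
      t * J u + (1 - t) * J v < J (t • u + (1 - t) • v)) ∧
    (K.Nonempty → IsCompact K →
      ∃! ustar, ustar ∈ K ∧ ∀ u ∈ K, J u ≤ J ustar) := by
  have etapos : ∀ u ∈ K, ∀ c, 0 < eta u c := fun u hu c => eta_pos (hpos u hu) c
  have hstrict : ∀ u ∈ K, ∀ v ∈ K, u ≠ v → ∀ t ∈ Set.Ioo (0 : ℝ) 1,
      t * J u + (1 - t) * J v < J (t • u + (1 - t) • v) := by
    intro u hu v hv huv t ht
    obtain ⟨c₀, hc₀⟩ := hrow u hu u hu v hv huv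
    have hex : ∃ a₀, eta u c₀ / u c₀ a₀ ≠ eta v c₀ / v c₀ a₀ := by
      by_contra h
      push_neg at h
      refine hc₀ ⟨1 - eta v c₀ / eta u c₀, fun a => ?_⟩
      have heq := h a
      have hu0 : u c₀ a ≠ 0 := (hpos u hu c₀ a).ne'
      have hv0 : v c₀ a ≠ 0 := (hpos v hv c₀ a).ne'
      have heu : eta u c₀ ≠ 0 := (etapos u hu c₀).ne'
      have hev : eta v c₀ ≠ 0 := (etapos v hv c₀).ne'
      rw [div_eq_div_iff hu0 hv0] at heq
      have hva : v c₀ a = eta v c₀ / eta u c₀ * u c₀ a := by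
        field_simp
        linarith [heq]
      rw [hva]
      ring
    obtain ⟨a₀, ha₀⟩ := hex
    exact strict_step (hpos u hu) (hpos v hv) ht.1 ht.2 ha₀
  refine ⟨hstrict, fun hne hcomp => ?_⟩
  have hcont : ContinuousOn J K := by
    intro u hu
    refine ContinuousAt.continuousWithinAt ?_
    have hterm : ∀ (c : Fin (n+1) → A) (a : A),
        ContinuousAt (fun w : (Fin (n + 1) → A) → A → ℝ =>
          w c a * Real.log (w c a / eta w c)) u := by
      intro c a
      have h1 : Continuous fun w : (Fin (n + 1) → A) → A → ℝ => w c a :=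
        (continuous_apply a).comp (continuous_apply c)
      have heta : Continuous fun w : (Fin (n + 1) → A) → A → ℝ => eta w c := by
        refine continuous_finset_sum _ fun b _ => ?_
        exact (continuous_apply b).comp (continuous_apply c)
      have hdiv : ContinuousAt (fun w : (Fin (n + 1) → A) → A → ℝ => w c a / eta w c) u :=
        h1.continuousAt.div heta.continuousAt (etapos u hu c).ne'
      have hlogarg : u c a / eta u c ≠ 0 :=
        (div_pos (hpos u hu c a) (etapos u hu c)).ne'
      have hlog : ContinuousAt (fun w : (Fin (n + 1) → A) → A → ℝ =>
          Real.log (w c a / eta w c)) u :=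
        ContinuousAt.comp (g := Real.log)
          (f := fun w : (Fin (n + 1) → A) → A → ℝ => w c a / eta w c)
          (Real.continuousAt_log hlogarg) hdiv
      exact h1.continuousAt.mul hlog
    have : ContinuousAt (fun w : (Fin (n + 1) → A) → A → ℝ =>
        ∑ c, ∑ a, w c a * Real.log (w c a / eta w c)) u := by
      refine tendsto_finset_sum _ fun c _ => ?_
      exact tendsto_finset_sum _ fun a _ => hterm c a
    exact this.neg
  obtain ⟨ustar, hmem, hmax⟩ := hcomp.exists_isMaxOn hne hcont
  refine ⟨ustar, ⟨hmem, fun u hu => hmax hu⟩, ?_⟩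
  rintro y ⟨hyK, hymax⟩
  by_contra hne'
  have hJeq : J y = J ustar := le_antisymm (hmax hyK) (hymax ustar hmem)
  have hmemK : (1/2 : ℝ) • y + (1 - 1/2 : ℝ) • ustar ∈ K := by
    refine hK hyK hmem (by norm_num) (by norm_num) (by norm_num)
  have hlt := hstrict y hyK ustar hmem hne' (1/2) ⟨by norm_num, by norm_num⟩
  have hle := hmax hmemK
  rw [hJeq] at hlt
  have : J ustar < J ((1/2 : ℝ) • y + (1 - 1/2 : ℝ) • ustar) := by linarith
  exact absurd hle (not_le.mpr this)
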